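/- arXiv:2605.17473 — 2 statements merged into one kernel-verified Lean document; each statement's English description precedes it below -/
import Mathlib

section
/- Let π : (X, d_X, T) → (Y, S) be a factor map between compact dynamical systems. Define the relative conditional upper metric mean dimension by mdim*(X,T|π,d_X) = limsup_{ε→0} (1/log(1/ε)) · inf_{diam(U,d_X) ≤ ε} h(T, U | V ∨ π), for any fixed finite open cover V of X, and the relative upper metric mean dimension mdim(X,T|π,d_X) using V = {X}. Then mdim*(X,T|π,d_X) = mdim(X,T|π,d_X); in particular the left side is independent of the choice of V. -/
open Classical Filter

/-- The join `U^n = ⋁_{j=0}^{n-1} T^{-j} U` of a finite family of sets. -/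
noncomputable def coverJoin {X : Type*} (T : X → X) (U : Finset (Set X)) (n : ℕ) :
    Finset (Set X) :=
  (Fintype.piFinset fun _ : Fin n => U).image fun f => ⋂ j : Fin n, T^[(j : ℕ)] ⁻¹' f j

/-- `N(V, Z)`: minimal number of members of the family `V` needed to cover `Z`. -/
noncomputable def coverCard {X : Type*} (V : Finset (Set X)) (Z : Set X) : ℕ :=
  sInf {k : ℕ | ∃ W : Finset (Set X), W ⊆ V ∧ W.card = k ∧ Z ⊆ ⋃₀ ↑W}
/-- `N(W | W' ∨ π) = max { N(W, V ∩ π^{-1}(y)) : V ∈ W', y ∈ Y }`. -/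
noncomputable def relCondCoverCard {X Y : Type*} (π : X → Y)
    (W W' : Finset (Set X)) : ℕ :=
  ⨆ y : Y, ⨆ V ∈ W', coverCard W (V ∩ π ⁻¹' {y})

/-- The relative conditional entropy `h(T, U | V ∨ π)` of an open cover `U`
given the cover `V` and the factor map `π`. -/
noncomputable def relCondEntropy {X Y : Type*} (T : X → X) (π : X → Y)
    (U V : Finset (Set X)) : ℝ :=
  Filter.limsup (fun n : ℕ =>
    Real.log (relCondCoverCard π (coverJoin T U n) (coverJoin T V n)) / n) Filter.atTop

/-- `inf_{diam(U,d_X) ≤ ε} h(T, U | V ∨ π)` over finite open covers `U` of `X`. -/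
noncomputable def relCondEntropyInf {X Y : Type*} [MetricSpace X] (T : X → X)
    (π : X → Y) (V : Finset (Set X)) (ε : ℝ) : ℝ :=
  sInf {h : ℝ | ∃ U : Finset (Set X), (∀ A ∈ U, IsOpen A) ∧
    ⋃₀ (U : Set (Set X)) = Set.univ ∧
    (∀ A ∈ U, ∀ p ∈ A, ∀ q ∈ A, dist p q ≤ ε) ∧ h = relCondEntropy T π U V}

/-- The relative conditional upper metric mean dimension of `π`, computed with the
auxiliary cover `V` of `X`. -/
noncomputable def relCondMdim {X Y : Type*} [MetricSpace X] (T : X → X) (π : X → Y)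
    (V : Finset (Set X)) : ℝ :=
  Filter.limsup (fun ε : ℝ => relCondEntropyInf T π V ε / Real.log (1 / ε))
    (nhdsWithin 0 (Set.Ioi 0))

section AuxLemmas

variable {X Y : Type*}

lemma log_nat_nonneg (n : ℕ) : 0 ≤ Real.log n := by
  rcases Nat.eq_zero_or_pos n with h | h
  · simp [h]
  · exact Real.log_nonneg (by exact_mod_cast h)

lemma log_nat_mono {a b : ℕ} (h : a ≤ b) : Real.log a ≤ Real.log b := by
  rcases Nat.eq_zero_or_pos a with h0 | h0
  · simpa [h0] using log_nat_nonneg b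
  · exact Real.log_le_log (by exact_mod_cast h0) (by exact_mod_cast h)

lemma log_nat_mul_le (a b : ℕ) : Real.log ((a * b : ℕ) : ℝ) ≤ Real.log a + Real.log b := by
  push_cast
  rcases Nat.eq_zero_or_pos a with h0 | h0
  · simpa [h0] using add_nonneg (log_nat_nonneg 0) (log_nat_nonneg b)
  rcases Nat.eq_zero_or_pos b with h1 | h1
  · simpa [h1] using add_nonneg (log_nat_nonneg a) (log_nat_nonneg 0)
  exact (Real.log_mul (by positivity) (by positivity)).le

lemma coverCard_le_card (W : Finset (Set X)) (Z : Set X) (h : Z ⊆ ⋃₀ ↑W) :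
    coverCard W Z ≤ W.card :=
  Nat.sInf_le ⟨W, subset_rfl, rfl, h⟩

lemma coverCard_mono (W : Finset (Set X)) {Z Z' : Set X} (hZ : Z ⊆ Z')
    (h : Z' ⊆ ⋃₀ ↑W) : coverCard W Z ≤ coverCard W Z' := by
  have hne : {k : ℕ | ∃ W' : Finset (Set X), W' ⊆ W ∧ W'.card = k ∧ Z' ⊆ ⋃₀ ↑W'}.Nonempty :=
    ⟨W.card, W, subset_rfl, rfl, h⟩
  obtain ⟨W', hsub, hcard, hcov⟩ := Nat.sInf_mem hne
  exact le_trans (Nat.sInf_le ⟨W', hsub, rfl, hZ.trans hcov⟩) hcard.le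

lemma coverJoin_cover (T : X → X) (U : Finset (Set X)) (hU : ⋃₀ (U : Set (Set X)) = Set.univ) (n : ℕ) :
    ⋃₀ ((coverJoin T U n : Finset (Set X)) : Set (Set X)) = Set.univ := by
  ext x
  simp only [Set.mem_univ, iff_true, Set.mem_sUnion]
  have hx : ∀ j : Fin n, ∃ t ∈ U, T^[(j : ℕ)] x ∈ t := by
    intro j
    have : T^[(j : ℕ)] x ∈ ⋃₀ (U : Set (Set X)) := by rw [hU]; trivial
    simpa using this
  choose f hf1 hf2 using hx
  refine ⟨⋂ j : Fin n, T^[(j : ℕ)] ⁻¹' f j, ?_, ?_⟩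
  · simp only [coverJoin, Finset.coe_image, Set.mem_image, Finset.mem_coe,
      Finset.mem_image]
    exact ⟨f, Fintype.mem_piFinset.2 hf1, rfl⟩
  · exact Set.mem_iInter.2 fun j => hf2 j

lemma coverJoin_card_le (T : X → X) (U : Finset (Set X)) (n : ℕ) :
    (coverJoin T U n).card ≤ U.card ^ n := by
  refine le_trans Finset.card_image_le ?_
  rw [Fintype.card_piFinset]
  simp

lemma coverJoin_univ (T : X → X) (n : ℕ) :
    coverJoin T ({Set.univ} : Finset (Set X)) n = {Set.univ} := by
  unfold coverJoin
  ext s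
  simp only [Finset.mem_image, Fintype.mem_piFinset, Finset.mem_singleton]
  constructor
  · rintro ⟨f, hf, rfl⟩
    have : ∀ j : Fin n, f j = Set.univ := fun j => by simpa using hf j
    simp [this]
  · rintro rfl
    exact ⟨fun _ => Set.univ, fun _ => by simp, by simp⟩

lemma relCondCoverCard_le (π : X → Y) (W W' : Finset (Set X)) {a : ℕ}
    (h : ∀ y : Y, ∀ V ∈ W', coverCard W (V ∩ π ⁻¹' {y}) ≤ a) :
    relCondCoverCard π W W' ≤ a :=
  ciSup_le' fun y => ciSup_le' fun V => ciSup_le' fun hV => h y V hV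

lemma le_relCondCoverCard (π : X → Y) (W W' : Finset (Set X)) (hW : ⋃₀ (W : Set (Set X)) = Set.univ)
    (y : Y) {V : Set X} (hV : V ∈ W') :
    coverCard W (V ∩ π ⁻¹' {y}) ≤ relCondCoverCard π W W' := by
  have hb : ∀ Z : Set X, coverCard W Z ≤ W.card := fun Z =>
    coverCard_le_card W Z (by rw [hW]; exact Set.subset_univ _)
  have h1 : coverCard W (V ∩ π ⁻¹' {y}) ≤ ⨆ V' ∈ W', coverCard W (V' ∩ π ⁻¹' {y}) := by
    refine le_trans ?_ (le_ciSup (f := fun V' => ⨆ _ : V' ∈ W', coverCard W (V' ∩ π ⁻¹' {y}))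
      ⟨W.card, ?_⟩ V)
    · exact le_ciSup (f := fun _ : V ∈ W' => coverCard W (V ∩ π ⁻¹' {y}))
        ⟨W.card, by rintro k ⟨h', rfl⟩; exact hb _⟩ hV
    · rintro k ⟨V', rfl⟩
      exact ciSup_le' fun _ => hb _
  exact le_trans h1 (le_ciSup (f := fun y => ⨆ V' ∈ W', coverCard W (V' ∩ π ⁻¹' {y}))
    ⟨W.card, by rintro k ⟨y', rfl⟩; exact ciSup_le' fun _ => ciSup_le' fun _ => hb _⟩ y)

lemma relCondCoverCard_le_card (π : X → Y) (W W' : Finset (Set X)) (hW : ⋃₀ (W : Set (Set X)) = Set.univ) :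
    relCondCoverCard π W W' ≤ W.card :=
  relCondCoverCard_le π W W' fun _ _ _ => coverCard_le_card W _ (by rw [hW]; exact Set.subset_univ _)


lemma coverCard_fiber_le_mul (π : X → Y) (WU WV : Finset (Set X))
    (hWU : ⋃₀ (WU : Set (Set X)) = Set.univ) (hWV : ⋃₀ (WV : Set (Set X)) = Set.univ) (y : Y) :
    coverCard WU (π ⁻¹' {y}) ≤ coverCard WV (π ⁻¹' {y}) * relCondCoverCard π WU WV := by
  have hne : {k : ℕ | ∃ W' : Finset (Set X), W' ⊆ WV ∧ W'.card = k ∧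
      π ⁻¹' {y} ⊆ ⋃₀ ↑W'}.Nonempty :=
    ⟨WV.card, WV, subset_rfl, rfl, by rw [hWV]; exact Set.subset_univ _⟩
  obtain ⟨W', hsub, hcard, hcov⟩ := Nat.sInf_mem hne
  have hGex : ∀ V : Set X, ∃ G : Finset (Set X), G ⊆ WU ∧
      G.card = coverCard WU (V ∩ π ⁻¹' {y}) ∧ V ∩ π ⁻¹' {y} ⊆ ⋃₀ ↑G := by
    intro V
    obtain ⟨G, h1, h2, h3⟩ := Nat.sInf_mem (⟨WU.card, WU, subset_rfl, rfl,
      by rw [hWU]; exact Set.subset_univ _⟩ :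
      {k : ℕ | ∃ W'' : Finset (Set X), W'' ⊆ WU ∧ W''.card = k ∧
        V ∩ π ⁻¹' {y} ⊆ ⋃₀ ↑W''}.Nonempty)
    exact ⟨G, h1, h2, h3⟩
  choose G hG1 hG2 hG3 using hGex
  set W'' := W'.biUnion G with hW''
  have hcovcomb : π ⁻¹' {y} ⊆ ⋃₀ ↑W'' := by
    intro x hx
    obtain ⟨V, hV, hxV⟩ := hcov hx
    obtain ⟨A, hA, hxA⟩ := hG3 V ⟨hxV, hx⟩
    refine ⟨A, ?_, hxA⟩
    simp only [hW'', Finset.coe_biUnion, Set.mem_iUnion, Finset.mem_coe]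
    exact ⟨V, hV, hA⟩
  have h1 : coverCard WU (π ⁻¹' {y}) ≤ W''.card := Nat.sInf_le ⟨W'', Finset.biUnion_subset.2
    (fun V _ => hG1 V), rfl, hcovcomb⟩
  have h2 : W''.card ≤ W'.card * relCondCoverCard π WU WV := by
    refine le_trans Finset.card_biUnion_le ?_
    refine le_trans (Finset.sum_le_card_nsmul _ _ (relCondCoverCard π WU WV) fun V hV => ?_) ?_
    · rw [hG2 V]; exact le_relCondCoverCard π WU WV hWU y (hsub hV)
    · simp [smul_eq_mul]
  refine (h1.trans h2).trans ?_
  rw [hcard]; rfl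

lemma exists_fine_cover [MetricSpace X] [CompactSpace X] {ε : ℝ} (hε : 0 < ε) :
    ∃ U : Finset (Set X), (∀ A ∈ U, IsOpen A) ∧ ⋃₀ (U : Set (Set X)) = Set.univ ∧
      (∀ A ∈ U, ∀ p ∈ A, ∀ q ∈ A, dist p q ≤ ε) := by
  obtain ⟨t, ht⟩ := isCompact_univ.elim_finite_subcover
    (fun x : X => Metric.ball x (ε / 2)) (fun x => Metric.isOpen_ball)
    (fun x _ => Set.mem_iUnion.2 ⟨x, Metric.mem_ball_self (by linarith)⟩)
  refine ⟨t.image (fun x => Metric.ball x (ε / 2)), ?_, ?_, ?_⟩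
  · intro A hA
    obtain ⟨x, -, rfl⟩ := Finset.mem_image.1 hA
    exact Metric.isOpen_ball
  · apply Set.eq_univ_of_univ_subset
    intro x hx
    obtain ⟨A, hA1, hA2⟩ := Set.mem_iUnion₂.1 (ht hx)
    refine ⟨Metric.ball A (ε/2), ?_, hA2⟩
    simp only [Finset.coe_image, Set.mem_image, Finset.mem_coe]
    exact ⟨A, hA1, rfl⟩
  · intro A hA p hp q hq
    obtain ⟨x, -, rfl⟩ := Finset.mem_image.1 hA
    have := Metric.mem_ball.1 hp
    have := Metric.mem_ball.1 hq
    have : dist p q ≤ dist p x + dist x q := dist_triangle p x q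
    rw [dist_comm x q] at this
    have h1 : dist p x < ε/2 := Metric.mem_ball.1 hp
    have h2 : dist q x < ε/2 := Metric.mem_ball.1 hq
    linarith


lemma cover_card_pos [Nonempty X] {U : Finset (Set X)}
    (hU : ⋃₀ (U : Set (Set X)) = Set.univ) : 1 ≤ U.card := by
  rcases Finset.eq_empty_or_nonempty U with rfl | h
  · exfalso
    have : (Classical.arbitrary X) ∈ ⋃₀ ((∅ : Finset (Set X)) : Set (Set X)) := by
      rw [hU]; trivial
    simpa using this
  · exact Finset.card_pos.2 h

lemma ent_fun_nonneg (T : X → X) (π : X → Y) (U V : Finset (Set X)) (n : ℕ) :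
    0 ≤ Real.log (relCondCoverCard π (coverJoin T U n) (coverJoin T V n)) / n :=
  div_nonneg (log_nat_nonneg _) (Nat.cast_nonneg n)

lemma ent_fun_le [Nonempty X] (T : X → X) (π : X → Y) (U V : Finset (Set X))
    (hU : ⋃₀ (U : Set (Set X)) = Set.univ) (n : ℕ) :
    Real.log (relCondCoverCard π (coverJoin T U n) (coverJoin T V n)) / n
      ≤ Real.log U.card := by
  have hU1 : 1 ≤ U.card := cover_card_pos hU
  have hN : relCondCoverCard π (coverJoin T U n) (coverJoin T V n) ≤ U.card ^ n :=
    (relCondCoverCard_le_card π _ _ (coverJoin_cover T U hU n)).trans (coverJoin_card_le T U n)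
  have hlog : Real.log (relCondCoverCard π (coverJoin T U n) (coverJoin T V n))
      ≤ n * Real.log U.card := by
    refine (log_nat_mono hN).trans ?_
    rw [Nat.cast_pow, Real.log_pow]
  rcases Nat.eq_zero_or_pos n with rfl | hn
  · simpa using Real.log_nonneg (by exact_mod_cast hU1)
  · rw [div_le_iff₀ (by exact_mod_cast hn)]
    rw [mul_comm] at hlog
    exact hlog.trans (by rw [mul_comm])

lemma relCondEntropy_nonneg (T : X → X) (π : X → Y) (U V : Finset (Set X))
    [Nonempty X] (hU : ⋃₀ (U : Set (Set X)) = Set.univ) :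
    0 ≤ relCondEntropy T π U V := by
  refine le_limsup_of_frequently_le (Frequently.of_forall fun n => ent_fun_nonneg T π U V n) ?_
  exact isBoundedUnder_of ⟨Real.log U.card, fun n => ent_fun_le T π U V hU n⟩

lemma relCondEntropy_cond_le [Nonempty X] (T : X → X) (π : X → Y) (U V : Finset (Set X))
    (hU : ⋃₀ (U : Set (Set X)) = Set.univ) (hV : ⋃₀ (V : Set (Set X)) = Set.univ) :
    relCondEntropy T π U V ≤ relCondEntropy T π U ({Set.univ} : Finset (Set X)) := by
  refine limsup_le_limsup (Eventually.of_forall fun n => ?_) ?_ ?_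
  · have h : relCondCoverCard π (coverJoin T U n) (coverJoin T V n)
        ≤ relCondCoverCard π (coverJoin T U n) (coverJoin T ({Set.univ} : Finset (Set X)) n) := by
      refine relCondCoverCard_le π _ _ fun y V' hV' => ?_
      have h1 : coverCard (coverJoin T U n) (V' ∩ π ⁻¹' {y})
          ≤ coverCard (coverJoin T U n) (Set.univ ∩ π ⁻¹' {y}) :=
        coverCard_mono _ (Set.inter_subset_inter_left _ (Set.subset_univ V'))
          (by rw [coverJoin_cover T U hU n]; exact Set.subset_univ _)
      refine h1.trans (le_relCondCoverCard π _ _ (coverJoin_cover T U hU n) y ?_)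
      rw [coverJoin_univ]; exact Finset.mem_singleton_self _
    have := log_nat_mono h
    rcases Nat.eq_zero_or_pos n with rfl | hn
    · simp
    · exact (div_le_div_iff_of_pos_right (by exact_mod_cast hn)).2 this
  · exact isCoboundedUnder_le_of_le atTop fun n => ent_fun_nonneg T π U V n
  · exact isBoundedUnder_of ⟨Real.log U.card, fun n => ent_fun_le T π U _ hU n⟩

lemma relCondEntropy_le_cond_add [Nonempty X] (T : X → X) (π : X → Y) (U V : Finset (Set X))
    (hU : ⋃₀ (U : Set (Set X)) = Set.univ) (hV : ⋃₀ (V : Set (Set X)) = Set.univ) :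
    relCondEntropy T π U ({Set.univ} : Finset (Set X))
      ≤ Real.log V.card + relCondEntropy T π U V := by
  have hV1 : 1 ≤ V.card := cover_card_pos hV
  have hUJ : ∀ n, ⋃₀ ((coverJoin T U n : Finset (Set X)) : Set (Set X)) = Set.univ :=
    coverJoin_cover T U hU
  have hVJ : ∀ n, ⋃₀ ((coverJoin T V n : Finset (Set X)) : Set (Set X)) = Set.univ :=
    coverJoin_cover T V hV
  have key : ∀ n : ℕ,
      Real.log (relCondCoverCard π (coverJoin T U n) (coverJoin T ({Set.univ} : Finset (Set X)) n)) / n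
        ≤ Real.log V.card
          + Real.log (relCondCoverCard π (coverJoin T U n) (coverJoin T V n)) / n := by
    intro n
    set NV := relCondCoverCard π (coverJoin T U n) (coverJoin T V n) with hNV
    set A := relCondCoverCard π (coverJoin T V n) ({Set.univ} : Finset (Set X)) with hA
    have h1 : relCondCoverCard π (coverJoin T U n) (coverJoin T ({Set.univ} : Finset (Set X)) n)
        ≤ A * NV := by
      rw [coverJoin_univ]
      refine relCondCoverCard_le π _ _ fun y V' hV' => ?_
      rw [Finset.mem_singleton] at hV'
      subst hV'
      rw [Set.univ_inter]
      refine (coverCard_fiber_le_mul π _ _ (hUJ n) (hVJ n) y).trans ?_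
      refine Nat.mul_le_mul_right _ ?_
      have h2 := le_relCondCoverCard π (coverJoin T V n) ({Set.univ} : Finset (Set X)) (hVJ n) y
        (Finset.mem_singleton_self Set.univ)
      rwa [Set.univ_inter] at h2
    have hAle : A ≤ V.card ^ n :=
      (relCondCoverCard_le_card π _ _ (hVJ n)).trans (coverJoin_card_le T V n)
    have hlog : Real.log (relCondCoverCard π (coverJoin T U n)
        (coverJoin T ({Set.univ} : Finset (Set X)) n)) ≤ n * Real.log V.card + Real.log NV := by
      refine (log_nat_mono h1).trans ((log_nat_mul_le A NV).trans ?_)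
      have : Real.log A ≤ n * Real.log V.card := by
        refine (log_nat_mono hAle).trans ?_
        rw [Nat.cast_pow, Real.log_pow]
      linarith
    rcases Nat.eq_zero_or_pos n with rfl | hn
    · simp only [Nat.cast_zero, div_zero, add_zero]
      exact Real.log_nonneg (by exact_mod_cast hV1)
    · have hn' : (0:ℝ) < n := by exact_mod_cast hn
      rw [div_le_iff₀ hn']
      have heq : (Real.log V.card + Real.log NV / n) * n
          = n * Real.log V.card + Real.log NV := by
        field_simp
      rw [heq]
      exact hlog
  refine (limsup_le_limsup (Eventually.of_forall key) ?_ ?_).trans ?_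
  · exact isCoboundedUnder_le_of_le atTop fun n => ent_fun_nonneg T π U _ n
  · refine isBoundedUnder_of ⟨Real.log V.card + Real.log U.card, fun n => ?_⟩
    exact add_le_add_right (ent_fun_le T π U V hU n) _
  refine le_of_eq ?_
  exact limsup_const_add atTop _ _
    (isBoundedUnder_of ⟨Real.log U.card, fun n => ent_fun_le T π U V hU n⟩)
    (isCoboundedUnder_le_of_le atTop fun n => ent_fun_nonneg T π U V n)

lemma limsup_congr_squeeze {ι : Type*} {l : Filter ι} [l.NeBot] {F G e : ι → ℝ}
    (h0 : ∀ᶠ x in l, 0 ≤ G x) (h1 : ∀ᶠ x in l, G x ≤ F x)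
    (h2 : ∀ᶠ x in l, F x ≤ G x + e x) (he : Tendsto e l (nhds 0)) :
    limsup F l = limsup G l := by
  have hF0 : ∀ᶠ x in l, 0 ≤ F x := by filter_upwards [h0, h1] with x hx hy; linarith
  by_cases hb : IsBoundedUnder (· ≤ ·) l F
  · have hGb : IsBoundedUnder (· ≤ ·) l G := hb.mono_le h1
    have hcobF : IsCoboundedUnder (· ≤ ·) l F := isCoboundedUnder_le_of_eventually_le l hF0
    have hcobG : IsCoboundedUnder (· ≤ ·) l G := isCoboundedUnder_le_of_eventually_le l h0
    refine le_antisymm ?_ (limsup_le_limsup h1 hcobG hb)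
    refine le_of_forall_pos_le_add fun δ hδ => ?_
    have hev : ∀ᶠ x in l, F x ≤ G x + δ := by
      filter_upwards [h2, he.eventually_lt_const hδ] with x hx hy
      linarith
    have hGbδ : IsBoundedUnder (· ≤ ·) l (fun x => G x + δ) := by
      obtain ⟨b, hbb⟩ := hGb
      refine ⟨b + δ, ?_⟩
      rw [eventually_map] at hbb ⊢
      filter_upwards [hbb] with x hx
      exact add_le_add_left hx δ
    refine (limsup_le_limsup hev hcobF hGbδ).trans ?_
    exact le_of_eq (limsup_add_const l G δ hGb hcobG)
  · have hGb : ¬ IsBoundedUnder (· ≤ ·) l G := by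
      intro hG
      obtain ⟨b, hbb⟩ := hG
      rw [eventually_map] at hbb
      refine hb ⟨b + 1, ?_⟩
      rw [eventually_map]
      filter_upwards [h2, hbb, he.eventually_lt_const one_pos] with x hx hy hz
      linarith
    have hFs : {a : ℝ | ∀ᶠ x in l, F x ≤ a} = ∅ :=
      Set.eq_empty_iff_forall_notMem.2 fun a ha => hb ⟨a, eventually_map.2 ha⟩
    have hGs : {a : ℝ | ∀ᶠ x in l, G x ≤ a} = ∅ :=
      Set.eq_empty_iff_forall_notMem.2 fun a ha => hGb ⟨a, eventually_map.2 ha⟩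
    rw [limsup_eq, limsup_eq, hFs, hGs]

section Inf
variable [MetricSpace X] [CompactSpace X] [Nonempty X] (T : X → X) (π : X → Y)

private def entSet (W : Finset (Set X)) (ε : ℝ) : Set ℝ :=
  {h : ℝ | ∃ U : Finset (Set X), (∀ A ∈ U, IsOpen A) ∧
    ⋃₀ (U : Set (Set X)) = Set.univ ∧
    (∀ A ∈ U, ∀ p ∈ A, ∀ q ∈ A, dist p q ≤ ε) ∧ h = relCondEntropy T π U W}

lemma entSet_nonempty {ε : ℝ} (hε : 0 < ε) (W : Finset (Set X)) : (entSet T π W ε).Nonempty := by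
  obtain ⟨U, h1, h2, h3⟩ := exists_fine_cover (X := X) hε
  exact ⟨relCondEntropy T π U W, U, h1, h2, h3, rfl⟩

lemma entSet_nonneg {ε : ℝ} (W : Finset (Set X)) : ∀ h ∈ entSet T π W ε, (0:ℝ) ≤ h := by
  rintro h ⟨U, h1, h2, h3, rfl⟩
  exact relCondEntropy_nonneg T π U W h2

lemma entropyInf_nonneg {ε : ℝ} (W : Finset (Set X)) : 0 ≤ relCondEntropyInf T π W ε :=
  Real.sInf_nonneg (entSet_nonneg T π W (ε := ε))

lemma entropyInf_le {ε : ℝ} (hε : 0 < ε) (V : Finset (Set X)) (hV : ⋃₀ (V : Set (Set X)) = Set.univ) :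
    relCondEntropyInf T π V ε ≤ relCondEntropyInf T π ({Set.univ} : Finset (Set X)) ε := by
  refine le_csInf (entSet_nonempty T π hε _) ?_
  rintro h ⟨U, h1, h2, h3, rfl⟩
  refine le_trans (csInf_le ⟨0, fun b hb => entSet_nonneg T π V (ε := ε) b hb⟩
    (⟨U, h1, h2, h3, rfl⟩ : relCondEntropy T π U V ∈ entSet T π V ε)) ?_
  exact relCondEntropy_cond_le T π U V h2 hV

lemma entropyInf_le_add {ε : ℝ} (hε : 0 < ε) (V : Finset (Set X)) (hV : ⋃₀ (V : Set (Set X)) = Set.univ) :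
    relCondEntropyInf T π ({Set.univ} : Finset (Set X)) ε
      ≤ relCondEntropyInf T π V ε + Real.log V.card := by
  have h : relCondEntropyInf T π ({Set.univ} : Finset (Set X)) ε - Real.log V.card
      ≤ relCondEntropyInf T π V ε := by
    refine le_csInf (entSet_nonempty T π hε _) ?_
    rintro h ⟨U, h1, h2, h3, rfl⟩
    have hle : relCondEntropyInf T π ({Set.univ} : Finset (Set X)) ε
        ≤ relCondEntropy T π U ({Set.univ} : Finset (Set X)) :=
      csInf_le ⟨0, fun b hb => entSet_nonneg T π _ (ε := ε) b hb⟩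
        (⟨U, h1, h2, h3, rfl⟩ : _ ∈ entSet T π ({Set.univ} : Finset (Set X)) ε)
    have := relCondEntropy_le_cond_add T π U V h2 hV
    linarith
  linarith
end Inf

end AuxLemmas

/-- Theorem 1.3: the relative conditional upper metric mean dimension (for any
finite open cover `V` of `X`) coincides with the relative upper metric mean
dimension, obtained by taking `V = {X}`. -/
theorem relCondMdim_eq_relMdim {X Y : Type*} [MetricSpace X] [CompactSpace X]
    [TopologicalSpace Y] [CompactSpace Y] (T : X → X) (S : Y → Y) (π : X → Y)
    (hT : Continuous T) (hS : Continuous S) (hπ : Continuous π)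
    (hsurj : Function.Surjective π) (hsemi : ∀ x, S (π x) = π (T x))
    (V : Finset (Set X)) (hVopen : ∀ A ∈ V, IsOpen A)
    (hVcover : ⋃₀ (V : Set (Set X)) = Set.univ) :
    relCondMdim T π V = relCondMdim T π ({Set.univ} : Finset (Set X)) := by
  rcases isEmpty_or_nonempty X with hX | hX
  · have hY : IsEmpty Y := ⟨fun y => by obtain ⟨x, -⟩ := hsurj y; exact hX.false x⟩
    have hcc : ∀ W W' : Finset (Set X), relCondCoverCard π W W' = 0 := by
      intro W W'
      simp [relCondCoverCard, ciSup_of_empty]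
    have hent : ∀ U : Finset (Set X),
        relCondEntropy T π U V = relCondEntropy T π U ({Set.univ} : Finset (Set X)) := by
      intro U
      unfold relCondEntropy
      simp only [hcc]
    have hinf : relCondEntropyInf T π V
        = relCondEntropyInf T π ({Set.univ} : Finset (Set X)) := by
      funext ε
      unfold relCondEntropyInf
      simp only [hent]
    unfold relCondMdim
    rw [hinf]
  · haveI := hX
    have hL : ∀ ε : ℝ, ε ∈ Set.Ioo (0:ℝ) 1 → 0 < Real.log (1/ε) := fun ε hε =>
      Real.log_pos (one_lt_one_div hε.1 hε.2)
    have hIoo : ∀ᶠ ε in nhdsWithin (0:ℝ) (Set.Ioi 0), ε ∈ Set.Ioo (0:ℝ) 1 :=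
      eventually_of_mem (Ioo_mem_nhdsGT_of_mem ⟨le_rfl, one_pos⟩) (fun x hx => hx)
    have hlog1 : Tendsto (fun ε : ℝ => Real.log (1/ε)) (nhdsWithin (0:ℝ) (Set.Ioi 0)) atTop :=
      Real.tendsto_log_atTop.comp (by
        have h := tendsto_inv_nhdsGT_zero (𝕜 := ℝ)
        refine h.congr fun x => ?_
        rw [one_div])
    unfold relCondMdim
    refine (limsup_congr_squeeze (e := fun ε : ℝ => Real.log V.card / Real.log (1/ε))
      ?_ ?_ ?_ ?_).symm
    · filter_upwards [hIoo] with ε hε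
      exact div_nonneg (entropyInf_nonneg T π V) (hL ε hε).le
    · filter_upwards [hIoo] with ε hε
      exact (div_le_div_iff_of_pos_right (hL ε hε)).2 (entropyInf_le T π hε.1 V hVcover)
    · filter_upwards [hIoo] with ε hε
      rw [← add_div]
      exact (div_le_div_iff_of_pos_right (hL ε hε)).2 (entropyInf_le_add T π hε.1 V hVcover)
    · exact Tendsto.div_atTop tendsto_const_nhds hlog1
end

section
/- Consider the random dynamical system of Example 5.4: Ω = {1,2}^ℤ with left shift θ, X a compact metric space with metric d, X^ℤ with metric D(x,y) = ∑_{n∈ℤ} d(x_n,y_n)/2^{|n|}, and T_ω = σ^{ω_0} (σ the left shift on X^ℤ). Then for every n ≥ 1, ε > 0 and every ω ∈ Ω, if E is a maximal (d,ε)-separated subset of X and y₀ ∈ X is fixed, the set E_{n,ω} of sequences (x_m)_{m∈ℤ} with x_m ∈ E for m ∈ {φ_j(1,ω) + 2φ_j(2,ω) : 0 ≤ j ≤ n−1} and x_m = y₀ otherwise is a (D_n^ω, ε)-separated set of X^ℤ of cardinality s(X,d,ε)^n; consequently s_n(X^ℤ, D, ω, ε) ≥ s(X,d,ε)^n. -/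
/-- The metric `D(x,y) = ∑_{n ∈ ℤ} d(x_n, y_n) / 2^{|n|}` on `X^ℤ`. -/
noncomputable def dZ {X : Type*} [MetricSpace X] (x y : ℤ → X) : ℝ :=
  ∑' n : ℤ, dist (x n) (y n) / 2 ^ n.natAbs

/-- The left shift by `k` steps on `X^ℤ`: `(σ^k x)_m = x_{m+k}`. -/
def shiftZ {X : Type*} (k : ℕ) (x : ℤ → X) : ℤ → X := fun m => x (m + k)

/-- `ψ_j(ω) = φ_j(1,ω) + 2 φ_j(2,ω) = ∑_{i=0}^{j-1} ω_i`, where the symbol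
`ω_i ∈ {1,2}` is encoded as `(ω i).val + 1` for `ω : ℤ → Fin 2`. -/
def psiSum (ω : ℤ → Fin 2) (j : ℕ) : ℕ :=
  ∑ i ∈ Finset.range j, ((ω (i : ℤ)).val + 1)

/-- weight -/
noncomputable def wZ (m : ℤ) : ℝ := ((2:ℝ) ^ m.natAbs)⁻¹

lemma wZ_nonneg (m : ℤ) : 0 ≤ wZ m := by unfold wZ; positivity

lemma summable_wZ : Summable wZ := by
  apply Summable.of_nat_of_neg
  · simpa [wZ, inv_pow] using summable_geometric_of_lt_one (by norm_num : (0:ℝ) ≤ 2⁻¹) (by norm_num)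
  · simpa [wZ, inv_pow] using summable_geometric_of_lt_one (by norm_num : (0:ℝ) ≤ 2⁻¹) (by norm_num)

noncomputable def Wtot : ℝ := ∑' m : ℤ, wZ m

lemma Wtot_nonneg : 0 ≤ Wtot := tsum_nonneg wZ_nonneg

lemma summable_dZ {X : Type*} [MetricSpace X] [CompactSpace X] (x y : ℤ → X) :
    Summable (fun m : ℤ => dist (x m) (y m) / 2 ^ m.natAbs) := by
  have hb : ∀ a b : X, dist a b ≤ Metric.diam (Set.univ : Set X) := fun a b =>
    Metric.dist_le_diam_of_mem isCompact_univ.isBounded trivial trivial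
  apply Summable.of_nonneg_of_le (fun m => by positivity)
    (fun m => ?_) (summable_wZ.mul_left (Metric.diam (Set.univ : Set X)))
  rw [div_eq_mul_inv]
  exact mul_le_mul_of_nonneg_right (hb _ _) (wZ_nonneg m)

lemma dist_le_dZ {X : Type*} [MetricSpace X] [CompactSpace X] (x y : ℤ → X) (k : ℤ) :
    dist (x k) (y k) / 2 ^ k.natAbs ≤ dZ x y :=
  Summable.le_tsum (summable_dZ x y) k (fun _ _ => by positivity)
lemma natAbs_split (M : ℕ) (m : ℤ) (hm : ¬(-(M:ℤ) ≤ m ∧ m ≤ M)) :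
    (if 0 ≤ m then m - M else m + M).natAbs + M = m.natAbs := by
  split <;> omega

lemma tail_bound (M : ℕ) :
    ∑' m : ↑((Finset.Icc (-(M:ℤ)) (M:ℤ) : Finset ℤ) : Set ℤ)ᶜ, wZ ↑m
      ≤ (2⁻¹:ℝ) ^ M * Wtot := by
  have hW : (2⁻¹:ℝ) ^ M * Wtot = ∑' m : ℤ, (2⁻¹:ℝ) ^ M * wZ m := tsum_mul_left.symm
  rw [hW]
  set e : ↑((Finset.Icc (-(M:ℤ)) (M:ℤ) : Finset ℤ) : Set ℤ)ᶜ → ℤ :=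
    fun m => if 0 ≤ (m:ℤ) then (m:ℤ) - M else (m:ℤ) + M with he_def
  have hmem : ∀ i : ↑((Finset.Icc (-(M:ℤ)) (M:ℤ) : Finset ℤ) : Set ℤ)ᶜ,
      ¬(-(M:ℤ) ≤ (i:ℤ) ∧ (i:ℤ) ≤ M) := by
    intro i
    have := i.2
    simpa [Finset.mem_Icc] using this
  have he : Function.Injective e := by
    intro i j hij
    have hi := hmem i; have hj := hmem j
    apply Subtype.ext
    simp only [he_def] at hij
    split at hij <;> split at hij <;> omega
  apply Summable.tsum_le_tsum_of_inj e he
  · intro c _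
    have := wZ_nonneg c
    positivity
  · intro i
    have key := natAbs_split M (i:ℤ) (hmem i)
    have : wZ (i:ℤ) = (2⁻¹:ℝ) ^ M * wZ (e i) := by
      unfold wZ
      rw [he_def]
      rw [← key, pow_add, mul_inv, inv_pow]
      ring
    rw [this]
  · exact summable_wZ.subtype _
  · exact summable_wZ.mul_left _

lemma dZ_le_bound {X : Type*} [MetricSpace X] [CompactSpace X] (x y : ℤ → X) (M : ℕ) (δ C : ℝ)
    (hC : ∀ a b : X, dist a b ≤ C)
    (h : ∀ m : ℤ, m.natAbs ≤ M → dist (x m) (y m) ≤ δ) :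
    dZ x y ≤ (2 * M + 1) * δ + C * ((2⁻¹:ℝ) ^ M * Wtot) := by
  have hsum := summable_dZ x y
  have hC0 : 0 ≤ C := le_trans dist_nonneg (hC (x 0) (x 0))
  have hδ0 : 0 ≤ δ := le_trans dist_nonneg (h 0 (by simp))
  rw [dZ, ← Summable.sum_add_tsum_compl (s := Finset.Icc (-(M:ℤ)) (M:ℤ)) hsum]
  apply add_le_add
  · calc ∑ m ∈ Finset.Icc (-(M:ℤ)) (M:ℤ), dist (x m) (y m) / 2 ^ m.natAbs
        ≤ ∑ _m ∈ Finset.Icc (-(M:ℤ)) (M:ℤ), δ := by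
          apply Finset.sum_le_sum
          intro m hm
          exact le_trans (div_le_self dist_nonneg (one_le_pow₀ (by norm_num)))
            (h m (by simp [Finset.mem_Icc] at hm; omega))
      _ = ((2 * M + 1 : ℕ) : ℝ) * δ := by
          rw [Finset.sum_const, nsmul_eq_mul]
          congr 1
          norm_cast
          rw [Int.card_Icc]
          omega
      _ = (2 * M + 1) * δ := by push_cast; ring
  · calc ∑' m : ↑((Finset.Icc (-(M:ℤ)) (M:ℤ) : Finset ℤ) : Set ℤ)ᶜ,
          dist (x (m:ℤ)) (y (m:ℤ)) / 2 ^ (m:ℤ).natAbs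
        ≤ ∑' m : ↑((Finset.Icc (-(M:ℤ)) (M:ℤ) : Finset ℤ) : Set ℤ)ᶜ, C * wZ (m:ℤ) := by
          apply Summable.tsum_le_tsum
          · intro i
            rw [div_eq_mul_inv]
            exact mul_le_mul (hC _ _) le_rfl (by positivity) hC0
          · exact hsum.subtype _
          · exact (summable_wZ.mul_left C).subtype _
      _ = C * ∑' m : ↑((Finset.Icc (-(M:ℤ)) (M:ℤ) : Finset ℤ) : Set ℤ)ᶜ, wZ (m:ℤ) :=
          tsum_mul_left
      _ ≤ C * ((2⁻¹:ℝ) ^ M * Wtot) := mul_le_mul_of_nonneg_left (tail_bound M) hC0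

lemma psiSum_strictMono (ω : ℤ → Fin 2) : StrictMono (psiSum ω) := by
  apply strictMono_nat_of_lt_succ
  intro k
  simp only [psiSum, Finset.sum_range_succ]
  omega

/-- Example 5.4: with `T_ω = σ^{ω_0}` driven by `Ω = {1,2}^ℤ`, for a maximal
`(d,ε)`-separated set `E ⊆ X` and base point `y₀`, the set `E_{n,ω}` of sequences
supported on the orbit-times `ψ_j(ω)` with values in `E` (and `y₀` elsewhere) is
`(D_n^ω, ε)`-separated of cardinality `s(X,d,ε)^n`; hence
`s_n(X^ℤ, D, ω, ε) ≥ s(X,d,ε)^n`. -/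
theorem randomShift_separated {X : Type*} [MetricSpace X] [CompactSpace X]
    (ω : ℤ → Fin 2) (n : ℕ) (hn : 1 ≤ n) (ε : ℝ) (hε : 0 < ε) (y₀ : X)
    (E : Finset X) (hEsep : ∀ a ∈ E, ∀ b ∈ E, a ≠ b → ε < dist a b)
    (hEmax : ∀ F : Finset X, (∀ a ∈ F, ∀ b ∈ F, a ≠ b → ε < dist a b) →
      F.card ≤ E.card) :
    (∀ x ∈ {x : ℤ → X | (∀ j < n, x ((psiSum ω j : ℕ) : ℤ) ∈ E) ∧
        ∀ m : ℤ, (∀ j < n, m ≠ ((psiSum ω j : ℕ) : ℤ)) → x m = y₀},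
      ∀ y ∈ {x : ℤ → X | (∀ j < n, x ((psiSum ω j : ℕ) : ℤ) ∈ E) ∧
        ∀ m : ℤ, (∀ j < n, m ≠ ((psiSum ω j : ℕ) : ℤ)) → x m = y₀},
      x ≠ y → ∃ j < n, ε < dZ (shiftZ (psiSum ω j) x) (shiftZ (psiSum ω j) y)) ∧
    ({x : ℤ → X | (∀ j < n, x ((psiSum ω j : ℕ) : ℤ) ∈ E) ∧
        ∀ m : ℤ, (∀ j < n, m ≠ ((psiSum ω j : ℕ) : ℤ)) → x m = y₀}.ncard
      = E.card ^ n) ∧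
    (sSup {k : ℕ | ∃ F : Finset X,
        (∀ a ∈ F, ∀ b ∈ F, a ≠ b → ε < dist a b) ∧ F.card = k}) ^ n ≤
      sSup {k : ℕ | ∃ F : Finset (ℤ → X),
        (∀ x ∈ F, ∀ y ∈ F, x ≠ y →
          ∃ j < n, ε < dZ (shiftZ (psiSum ω j) x) (shiftZ (psiSum ω j) y)) ∧
        F.card = k} := by
  classical
  set A : Set (ℤ → X) := {x : ℤ → X | (∀ j < n, x ((psiSum ω j : ℕ) : ℤ) ∈ E) ∧
    ∀ m : ℤ, (∀ j < n, m ≠ ((psiSum ω j : ℕ) : ℤ)) → x m = y₀} with hAdef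
  -- Part 1 : separation
  have part1 : ∀ x ∈ A, ∀ y ∈ A, x ≠ y →
      ∃ j < n, ε < dZ (shiftZ (psiSum ω j) x) (shiftZ (psiSum ω j) y) := by
    rintro x ⟨hx1, hx2⟩ y ⟨hy1, hy2⟩ hxy
    obtain ⟨m, hm⟩ := Function.ne_iff.mp hxy
    by_cases hms : ∀ j < n, m ≠ ((psiSum ω j : ℕ) : ℤ)
    · exact absurd (by rw [hx2 m hms, hy2 m hms]) hm
    · push_neg at hms
      obtain ⟨j, hj, rfl⟩ := hms
      refine ⟨j, hj, ?_⟩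
      have h1 : ε < dist (x ((psiSum ω j : ℕ) : ℤ)) (y ((psiSum ω j : ℕ) : ℤ)) :=
        hEsep _ (hx1 j hj) _ (hy1 j hj) hm
      have h2 := dist_le_dZ (shiftZ (psiSum ω j) x) (shiftZ (psiSum ω j) y) 0
      simp only [shiftZ, zero_add, Int.natAbs_zero, pow_zero, div_one] at h2
      linarith
  -- the support finset
  set S : Finset ℤ := (Finset.range n).image (fun j => ((psiSum ω j : ℕ) : ℤ)) with hSdef
  have hinj : Function.Injective (fun j : ℕ => ((psiSum ω j : ℕ) : ℤ)) := fun a b h =>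
    (psiSum_strictMono ω).injective (Int.natCast_inj.mp h)
  have hSmem : ∀ m : ℤ, m ∈ S ↔ ∃ j < n, m = ((psiSum ω j : ℕ) : ℤ) := by
    intro m
    simp only [hSdef, Finset.mem_image, Finset.mem_range]
    constructor
    · rintro ⟨j, hj, rfl⟩; exact ⟨j, hj, rfl⟩
    · rintro ⟨j, hj, rfl⟩; exact ⟨j, hj, rfl⟩
  have hScard : S.card = n := by
    rw [hSdef, Finset.card_image_of_injective _ hinj, Finset.card_range]
  -- the parametrization
  set Φ : ({m // m ∈ S} → {a // a ∈ E}) → (ℤ → X) :=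
    (fun f m => if h : m ∈ S then (f ⟨m, h⟩ : X) else y₀) with hΦdef
  have hΦinj : Function.Injective Φ := by
    intro f g hfg
    funext s
    have h := congrFun hfg (s : ℤ)
    simp only [hΦdef, dif_pos s.2, Subtype.coe_eta] at h
    exact Subtype.ext h
  have hrange : Set.range Φ = A := by
    ext x
    constructor
    · rintro ⟨f, rfl⟩
      refine ⟨fun j hj => ?_, fun m hm => ?_⟩
      · have hmem : ((psiSum ω j : ℕ) : ℤ) ∈ S := (hSmem _).2 ⟨j, hj, rfl⟩
        simp only [hΦdef, dif_pos hmem]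
        exact (f _).2
      · have hns : m ∉ S := fun hc => by
          obtain ⟨j, hj, he⟩ := (hSmem m).1 hc
          exact hm j hj he
        simp [hΦdef, hns]
    · rintro ⟨hx1, hx2⟩
      refine ⟨fun s => ⟨x (s : ℤ), ?_⟩, ?_⟩
      · obtain ⟨j, hj, he⟩ := (hSmem (s : ℤ)).1 s.2
        rw [he]; exact hx1 j hj
      · funext m
        by_cases h : m ∈ S
        · simp [hΦdef, h]
        · simp only [hΦdef, dif_neg h]
          exact (hx2 m (fun j hj he => h ((hSmem m).2 ⟨j, hj, he⟩))).symm
  -- Part 2 : cardinality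
  have part2 : A.ncard = E.card ^ n := by
    rw [← hrange, ← Nat.card_coe_set_eq, Nat.card_range_of_injective hΦinj, Nat.card_fun,
      Nat.card_eq_finsetCard, Nat.card_eq_finsetCard, hScard]
  refine ⟨part1, part2, ?_⟩
  -- Part 3
  have h1 : sSup {k : ℕ | ∃ F : Finset X,
      (∀ a ∈ F, ∀ b ∈ F, a ≠ b → ε < dist a b) ∧ F.card = k} = E.card := by
    apply IsGreatest.csSup_eq
    exact ⟨⟨E, hEsep, rfl⟩, by rintro k ⟨F, hF, rfl⟩; exact hEmax F hF⟩
  rw [h1]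
  -- constants for the covering argument
  set C := Metric.diam (Set.univ : Set X) with hCdef
  have hC : ∀ a b : X, dist a b ≤ C := fun a b =>
    Metric.dist_le_diam_of_mem isCompact_univ.isBounded trivial trivial
  have hC0 : 0 ≤ C := Metric.diam_nonneg
  obtain ⟨M, hM⟩ := exists_pow_lt_of_lt_one
    (show (0:ℝ) < (ε/2)/(C*Wtot+1) by
      have := Wtot_nonneg; positivity) (by norm_num : (2⁻¹:ℝ) < 1)
  have hpow0 : (0:ℝ) ≤ (2⁻¹:ℝ) ^ M := by positivity
  have htail : C * ((2⁻¹:ℝ) ^ M * Wtot) < ε/2 := by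
    have h2 : (0:ℝ) < C*Wtot+1 := by have := Wtot_nonneg; positivity
    rw [lt_div_iff₀ h2] at hM
    nlinarith [Wtot_nonneg, mul_nonneg hC0 Wtot_nonneg]
  set δ : ℝ := ε / (8 * (M+1)) with hδdef
  have hδpos : 0 < δ := by positivity
  have hsum_bound : (2*(M:ℝ)+1) * (2*δ) ≤ ε/2 := by
    have hMpos : (0:ℝ) < M + 1 := by positivity
    rw [show (2*(M:ℝ)+1) * (2*δ) = ((2*(M:ℝ)+1)*2*ε)/(8*((M:ℝ)+1)) by rw [hδdef]; ring]
    rw [div_le_div_iff₀ (by positivity) (by norm_num : (0:ℝ) < 2)]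
    nlinarith [hε.le]
  -- the cover
  set K : Finset ℤ := Finset.Icc (-(M:ℤ)) ((M:ℤ) + (psiSum ω n)) with hKdef
  set V : (ℤ → X) → Set (ℤ → X) := fun z => {y | ∀ m ∈ K, dist (z m) (y m) < δ} with hVdef
  have hVopen : ∀ z, IsOpen (V z) := by
    intro z
    have hVeq : V z = ⋂ m ∈ K, (fun y : ℤ → X => y m) ⁻¹' Metric.ball (z m) δ := by
      ext y
      simp [hVdef, Metric.mem_ball, dist_comm]
    rw [hVeq]
    exact isOpen_biInter_finset (fun m _ => (Metric.isOpen_ball).preimage (continuous_apply m))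
  have hcover : (Set.univ : Set (ℤ → X)) ⊆ ⋃ z, V z := fun y _ =>
    Set.mem_iUnion.2 ⟨y, fun m _ => by simpa using hδpos⟩
  obtain ⟨t, ht⟩ := isCompact_univ.elim_finite_subcover V hVopen hcover
  have hchoice : ∀ f : ℤ → X, ∃ z ∈ t, f ∈ V z := by
    intro f
    have := ht (Set.mem_univ f)
    simpa using this
  choose c hc1 hc2 using hchoice
  -- boundedness of the second sSup set
  have hbdd : BddAbove {k : ℕ | ∃ F : Finset (ℤ → X),
      (∀ x ∈ F, ∀ y ∈ F, x ≠ y →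
        ∃ j < n, ε < dZ (shiftZ (psiSum ω j) x) (shiftZ (psiSum ω j) y)) ∧
      F.card = k} := by
    refine ⟨t.card, ?_⟩
    rintro k ⟨F, hF, rfl⟩
    apply Finset.card_le_card_of_injOn c (fun f _ => hc1 f)
    intro f hf g hg hfg
    by_contra hne
    obtain ⟨j, hj, hsep⟩ := hF f hf g hg hne
    have hdist : ∀ m : ℤ, m.natAbs ≤ M →
        dist (shiftZ (psiSum ω j) f m) (shiftZ (psiSum ω j) g m) ≤ 2*δ := by
      intro m hm
      have hψ : psiSum ω j ≤ psiSum ω n := (psiSum_strictMono ω).monotone hj.le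
      have hmK : m + (psiSum ω j : ℤ) ∈ K := by
        simp only [hKdef, Finset.mem_Icc]
        omega
      have hd1 := hc2 f (m + (psiSum ω j : ℤ)) hmK
      have hd2 := hc2 g (m + (psiSum ω j : ℤ)) hmK
      rw [hfg] at hd1
      simp only [shiftZ]
      calc dist (f (m + (psiSum ω j : ℤ))) (g (m + (psiSum ω j : ℤ)))
          ≤ dist (f (m + (psiSum ω j : ℤ))) (c g (m + (psiSum ω j : ℤ)))
            + dist (c g (m + (psiSum ω j : ℤ))) (g (m + (psiSum ω j : ℤ))) := dist_triangle _ _ _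
        _ ≤ 2 * δ := by rw [dist_comm] at hd1; linarith
    have hbound := dZ_le_bound (shiftZ (psiSum ω j) f) (shiftZ (psiSum ω j) g) M (2*δ) C hC hdist
    linarith
  -- membership of E.card ^ n
  have hAfin : A.Finite := hrange ▸ Set.finite_range Φ
  apply le_csSup hbdd
  refine ⟨hAfin.toFinset, ?_, ?_⟩
  · intro x hx y hy hxy
    exact part1 x (hAfin.mem_toFinset.1 hx) y (hAfin.mem_toFinset.1 hy) hxy
  · rw [← Set.ncard_eq_toFinset_card A hAfin, part2]
end
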